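/- Let C be a rotation-equivalence class of binary strings of length n whose members contain at least one 1, and let ν = ν_1 ν_2 ⋯ ν_n be the unique necklace in C. Then α = 1 ν_1 ν_2 ⋯ ν_{n−1} is the unique string a_1 a_2 ⋯ a_n in C such that a_1 = 1 and a_2 a_3 ⋯ a_n 1 is a necklace. -/
import Mathlib


/-- A binary necklace: lexicographically less than or equal to all its rotations. -/
def IsNecklace (l : List Bool) : Prop :=
  ∀ r : ℕ, r < l.length → l ≤ l.rotate r

private lemma lex_aux : ∀ l : List Bool, true ∈ l → (false :: l.dropLast) < l := by
  intro l
  induction l with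
  | nil => simp
  | cons b t ih =>
    intro h
    cases t with
    | nil =>
      simp at h
      subst h
      exact List.Lex.rel (by decide)
    | cons c t' =>
      rw [List.dropLast_cons₂]
      cases b with
      | true => exact List.Lex.rel (by decide)
      | false =>
        refine List.Lex.cons ?_
        have ht : true ∈ c :: t' := by simpa using h
        exact ih ht

private lemma last_true {ν : List Bool} (hne : ν ≠ []) (hν : IsNecklace ν)
    (h1 : true ∈ ν) : ν = ν.dropLast ++ [true] := by
  have hd := (List.dropLast_append_getLast hne).symm
  by_cases hg : ν.getLast hne = true
  · rw [← hg]; exact hd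
  · exfalso
    have hg' : ν.getLast hne = false := by simpa using hg
    have hrot : ν.rotate ν.dropLast.length = [ν.getLast hne] ++ ν.dropLast := by
      have h := List.rotate_append_length_eq ν.dropLast [ν.getLast hne]
      rw [← hd] at h
      exact h
    have hlt : ν.dropLast.length < ν.length := by
      rw [List.length_dropLast]
      have : 0 < ν.length := List.length_pos_iff.mpr hne
      omega
    have hle := hν _ hlt
    rw [hrot, hg'] at hle
    exact absurd hle (not_le.mpr (lex_aux ν h1))

private lemma necklace_unique {x y : List Bool} (hx : IsNecklace x) (hy : IsNecklace y)
    (hne : x ≠ []) (r : ℕ) (hr : y = x.rotate r) : x = y := by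
  have hn : 0 < x.length := List.length_pos_iff.mpr hne
  have hy' : y = x.rotate (r % x.length) := by rw [List.rotate_mod]; exact hr
  rcases Nat.eq_zero_or_pos (r % x.length) with h0 | hpos
  · rw [hy', h0, List.rotate_zero]
  · set s := r % x.length with hs
    have hsl : s < x.length := Nat.mod_lt _ hn
    have hxy : x ≤ y := by rw [hy']; exact hx s hsl
    have hback : y.rotate (x.length - s) = x := by
      rw [hy', List.rotate_rotate]
      have : s + (x.length - s) = x.length := by omega
      rw [this, List.rotate_length]
    have hyx : y ≤ x := by
      rw [← hback]
      exact hy (x.length - s) (by rw [hy', List.length_rotate]; omega)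
    exact le_antisymm hxy hyx

theorem unique_bridge_state (n : ℕ) (hn : 0 < n) (ν : List Bool)
    (hlen : ν.length = n) (hν : IsNecklace ν) (h1 : true ∈ ν) :
    (∃ r : ℕ, true :: ν.dropLast = ν.rotate r) ∧
      IsNecklace (ν.dropLast ++ [true]) ∧
      ∀ a : List Bool, (∃ r : ℕ, a = ν.rotate r) → a.headI = true →
        IsNecklace (a.tail ++ [true]) → a = true :: ν.dropLast := by
  have hne : ν ≠ [] := by intro h; subst h; simp at hlen; omega
  have hlast := last_true hne hν h1
  have hrot : ν.rotate ν.dropLast.length = true :: ν.dropLast := by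
    have h := List.rotate_append_length_eq ν.dropLast [true]
    rw [← hlast] at h
    exact h
  refine ⟨⟨ν.dropLast.length, hrot.symm⟩, by rw [← hlast]; exact hν, ?_⟩
  rintro a ⟨r, hr⟩ hhead hna
  have hane : a ≠ [] := by
    intro h
    rw [h] at hr
    have := congrArg List.length hr
    simp [hlen] at this
    omega
  obtain ⟨b, t, rfl⟩ : ∃ b t, a = b :: t := by
    cases a with
    | nil => exact absurd rfl hane
    | cons b t => exact ⟨b, t, rfl⟩
  have hb : b = true := by simpa using hhead
  subst hb
  have htr : t ++ [true] = ν.rotate (r + 1) := by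
    have h : (true :: t).rotate 1 = t ++ [true] := by
      rw [List.rotate_cons_succ, List.rotate_zero]
    rw [← h, hr, List.rotate_rotate]
  have hna' : IsNecklace (t ++ [true]) := by simpa using hna
  have huniq : ν = t ++ [true] := necklace_unique hν hna' hne (r + 1) htr
  have ht : t = ν.dropLast := by
    have h := hlast.symm.trans huniq
    exact (List.append_left_injective [true] h).symm
  rw [ht]
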